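/- Let f_ρ, f_π satisfy Assumption (A) with constants M, L, δ, C₆, let β := ((d−1)! ∏_{j=1}^d log(1+C₇δ_j))^{1/d}, and for ε > 0 let S̃_ε be the monotone triangular rational bijection of [-1,1]^d produced by the rational-approximation proposition for the inverse Knothe–Rosenblatt transport S = T^{-1} (so that ‖S_k − S̃_{ε,k}‖_{W^{1,∞}} ≤ C exp(−τβ N_ε^{1/d}) for all k). Then for every τ ∈ (0,1) there exists C = C(d,τ,ρ,π) > 0 such that for every ε > 0, with g_ε := (f_ρ∘S̃_ε)·det dS̃_ε the density of the pullback measure S̃_ε^♯ρ, each of the quantities d_H(S̃_ε^♯ρ, π) := (½∫_{[-1,1]^d}(√g_ε − √f_π)² dμ)^{1/2}, d_TV(S̃_ε^♯ρ, π) := ½∫_{[-1,1]^d}|g_ε − f_π| dμ, and D_KL(S̃_ε^♯ρ ‖ π) := ∫_{[-1,1]^d} g_ε · log(g_ε/f_π) dμ is bounded by C exp(−τβ N_ε^{1/d}). -/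

import Mathlib

open Set MeasureTheory

/-- The uniform probability measure `μ₁` on `[-1,1]` (half of Lebesgue measure). -/
noncomputable def mu1 : Measure ℝ :=
  (2 : ENNReal)⁻¹ • (volume.restrict (Set.Icc (-1 : ℝ) 1))

/-- The product measure `μ = μ₁^{⊗d}` on `[-1,1]^d`. -/
noncomputable def muD (d : ℕ) : Measure (Fin d → ℝ) := Measure.pi fun _ => mu1

/-- The cube `[-1,1]^d`. -/
def cube (d : ℕ) : Set (Fin d → ℝ) := {x | ∀ j, x j ∈ Set.Icc (-1 : ℝ) 1}

/-- `[-1,1]` regarded as a subset of `ℂ`. -/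
def segC : Set ℂ := Complex.ofReal '' Set.Icc (-1 : ℝ) 1

/-- The open `δ`-neighborhood `B_δ(S)` of a set `S ⊆ ℂ`. -/
def cNbhd (δ : ℝ) (S : Set ℂ) : Set ℂ := {z : ℂ | ∃ y ∈ S, ‖z - y‖ < δ}

/-- The multi-index set `Λ_{k,ε}` (with `k = j+1`, multi-indices realized in `ℕ^d` with
support in `{i : i ≤ j}`, and `γ(ξ,ν) = ξ_j^{-max{1,ν_j}}·∏_{i<j} ξ_i^{-ν_i}`). -/
def Lam (d : ℕ) (ξ : Fin d → ℝ) (j : Fin d) (ε : ℝ) : Set (Fin d → ℕ) :=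
  {ν | (∀ i : Fin d, ¬i ≤ j → ν i = 0) ∧
    ε ≤ (ξ j)⁻¹ ^ max 1 (ν j) *
        ∏ i ∈ Finset.univ.filter (fun i : Fin d => i < j), (ξ i)⁻¹ ^ ν i}

/-- Partial derivative of `g` in the `i`-th coordinate (within the cube). -/
noncomputable def pd (d : ℕ) (g : (Fin d → ℝ) → ℝ) (i : Fin d) (x : Fin d → ℝ) : ℝ :=
  derivWithin (fun t => g (Function.update x i t)) (Set.Icc (-1 : ℝ) 1) (x i)

/-- The Jacobian determinant `det dS(x) = ∏_j ∂_{x_j}S_j(x)` of a triangular map. -/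
noncomputable def detd (d : ℕ) (S : (Fin d → ℝ) → Fin d → ℝ) (x : Fin d → ℝ) : ℝ :=
  ∏ j : Fin d, pd d (fun y => S y j) j x

/-- The `W^{1,∞}([-1,1]^d)` distance of two maps. -/
noncomputable def W1dist (d : ℕ) (S S' : (Fin d → ℝ) → Fin d → ℝ) : ℝ :=
  max (⨆ j : Fin d, ⨆ x : cube d, |S (x : Fin d → ℝ) j - S' (x : Fin d → ℝ) j|)
    (⨆ j : Fin d, ⨆ i : Fin d, ⨆ x : cube d,
      |pd d (fun y => S y j) i (x : Fin d → ℝ) - pd d (fun y => S' y j) i (x : Fin d → ℝ)|)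

namespace Stmt12Aux

lemma cube_eq (d : ℕ) : cube d = Set.pi Set.univ (fun _ : Fin d => Set.Icc (-1:ℝ) 1) := by
  ext x
  simp only [cube, Set.mem_setOf_eq, Set.mem_pi, Set.mem_univ, forall_true_left]

lemma isCompact_cube (d : ℕ) : IsCompact (cube d) := by
  rw [cube_eq]; exact isCompact_univ_pi (fun _ => isCompact_Icc)

lemma convex_cube (d : ℕ) : Convex ℝ (cube d) := by
  rw [cube_eq]; exact convex_pi (fun i _ => convex_Icc _ _)

lemma zero_mem_cube (d : ℕ) : (fun _ : Fin d => (0:ℝ)) ∈ cube d := by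
  intro j; constructor <;> norm_num

lemma uniqueDiffOn_cube (d : ℕ) : UniqueDiffOn ℝ (cube d) := by
  apply uniqueDiffOn_convex (convex_cube d)
  rw [cube_eq, interior_pi_set Set.finite_univ]
  refine ⟨(fun _ => 0), ?_⟩
  intro i _
  simp only [Function.comp, interior_Icc, Set.mem_Ioo]
  norm_num

lemma update_mem_cube {d : ℕ} {x : Fin d → ℝ} (hx : x ∈ cube d) (i : Fin d) {t : ℝ}
    (ht : t ∈ Set.Icc (-1:ℝ) 1) : Function.update x i t ∈ cube d := by
  intro j
  rcases eq_or_ne j i with h | h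
  · subst h; simpa using ht
  · simpa [Function.update_of_ne h] using hx j

lemma slice_hasDerivWithinAt {d : ℕ} {G : (Fin d → ℝ) → Fin d → ℝ}
    (hG : ContDiffOn ℝ 1 G (cube d)) (j i : Fin d) {x : Fin d → ℝ} (hx : x ∈ cube d) :
    HasDerivWithinAt (fun t => G (Function.update x i t) j)
      ((fderivWithin ℝ G (cube d) x (Pi.single i 1)) j) (Set.Icc (-1:ℝ) 1) (x i) := by
  have hdiff : DifferentiableWithinAt ℝ G (cube d) x := (hG.differentiableOn one_ne_zero) x hx
  have hfd : HasFDerivWithinAt G (fderivWithin ℝ G (cube d) x) (cube d) x :=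
    hdiff.hasFDerivWithinAt
  have hupd : HasDerivWithinAt (Function.update x i) (Pi.single i 1) (Set.Icc (-1:ℝ) 1) (x i) :=
    (hasDerivAt_update x i (x i)).hasDerivWithinAt
  have hmaps : Set.MapsTo (Function.update x i) (Set.Icc (-1:ℝ) 1) (cube d) :=
    fun t ht => update_mem_cube hx i ht
  have hfd' : HasFDerivWithinAt G (fderivWithin ℝ G (cube d) x) (cube d)
      (Function.update x i (x i)) := by rwa [Function.update_eq_self]
  have hcomp := hfd'.comp_hasDerivWithinAt (x i) hupd hmaps
  have hproj := (ContinuousLinearMap.proj (R := ℝ) (φ := fun _ : Fin d => ℝ)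
    j).hasFDerivAt.comp_hasDerivWithinAt (x i) hcomp
  exact hproj

lemma pd_eq {d : ℕ} {G : (Fin d → ℝ) → Fin d → ℝ}
    (hG : ContDiffOn ℝ 1 G (cube d)) (j i : Fin d) {x : Fin d → ℝ} (hx : x ∈ cube d) :
    pd d (fun y => G y j) i x = (fderivWithin ℝ G (cube d) x (Pi.single i 1)) j :=
  (slice_hasDerivWithinAt hG j i hx).derivWithin
    ((uniqueDiffOn_Icc (by norm_num)) _ (hx i))

lemma pd_bound {d : ℕ} {G : (Fin d → ℝ) → Fin d → ℝ}
    (hG : ContDiffOn ℝ 1 G (cube d)) :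
    ∃ B : ℝ, 1 ≤ B ∧ ∀ (j i : Fin d), ∀ x ∈ cube d, |pd d (fun y => G y j) i x| ≤ B := by
  have hcont := hG.continuousOn_fderivWithin (uniqueDiffOn_cube d) le_rfl
  obtain ⟨B0, hB0⟩ := (isCompact_cube d).exists_bound_of_continuousOn hcont
  refine ⟨max B0 1, le_max_right _ _, fun j i x hx => ?_⟩
  rw [pd_eq hG j i hx]
  have h1 : |(fderivWithin ℝ G (cube d) x (Pi.single i 1)) j|
      ≤ ‖fderivWithin ℝ G (cube d) x (Pi.single i 1)‖ := by
    simpa [Real.norm_eq_abs] using norm_le_pi_norm (fderivWithin ℝ G (cube d) x (Pi.single i 1)) j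
  have h2 : ‖fderivWithin ℝ G (cube d) x (Pi.single i 1)‖
      ≤ ‖fderivWithin ℝ G (cube d) x‖ * ‖Pi.single (M := fun _ : Fin d => ℝ) i (1:ℝ)‖ :=
    (fderivWithin ℝ G (cube d) x).le_opNorm _
  have h3 : ‖Pi.single (M := fun _ : Fin d => ℝ) i (1:ℝ)‖ = 1 := by
    rw [Pi.norm_single]; simp
  have h4 := hB0 x hx
  calc |(fderivWithin ℝ G (cube d) x (Pi.single i 1)) j| ≤ _ := h1
    _ ≤ _ := h2
    _ = ‖fderivWithin ℝ G (cube d) x‖ := by rw [h3, mul_one]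
    _ ≤ B0 := h4
    _ ≤ max B0 1 := le_max_left _ _

lemma pd_nonneg {d : ℕ} {G : (Fin d → ℝ) → Fin d → ℝ}
    (hG : ContDiffOn ℝ 1 G (cube d)) (j : Fin d) {x : Fin d → ℝ} (hx : x ∈ cube d)
    (hmono : StrictMonoOn (fun t => G (Function.update x j t) j) (Set.Icc (-1:ℝ) 1)) :
    0 ≤ pd d (fun y => G y j) j x := by
  have hder : HasDerivWithinAt (fun t => G (Function.update x j t) j)
      (pd d (fun y => G y j) j x) (Set.Icc (-1:ℝ) 1) (x j) := by
    have h := slice_hasDerivWithinAt hG j j hx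
    rwa [← pd_eq hG j j hx] at h
  have hts : x j ∈ Set.Icc (-1:ℝ) 1 := hx j
  rw [hasDerivWithinAt_iff_tendsto_slope] at hder
  have hne : (nhdsWithin (x j) (Set.Icc (-1:ℝ) 1 \ {x j})).NeBot := by
    rcases lt_or_ge (x j) 1 with h1 | h1
    · have hsub : Set.Ioc (x j) 1 ⊆ Set.Icc (-1:ℝ) 1 \ {x j} := by
        intro s hs
        refine ⟨⟨le_trans hts.1 hs.1.le, hs.2⟩, ?_⟩
        exact fun h => hs.1.ne' (by simpa using h)
      have : (nhdsWithin (x j) (Set.Ioc (x j) 1)).NeBot := left_nhdsWithin_Ioc_neBot h1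
      exact this.mono (nhdsWithin_mono _ hsub)
    · have hx1 : x j = 1 := le_antisymm hts.2 h1
      have hsub : Set.Ico (-1:ℝ) (x j) ⊆ Set.Icc (-1:ℝ) 1 \ {x j} := by
        intro s hs
        exact ⟨⟨hs.1, le_trans hs.2.le hts.2⟩, fun h => absurd h (by simp [hs.2.ne])⟩
      have : (nhdsWithin (x j) (Set.Ico (-1:ℝ) (x j))).NeBot := by
        rw [hx1]; exact right_nhdsWithin_Ico_neBot (by norm_num)
      exact this.mono (nhdsWithin_mono _ hsub)
  refine ge_of_tendsto hder ?_
  filter_upwards [self_mem_nhdsWithin] with s hs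
  rcases hs with ⟨hsIcc, hsne⟩
  have hsne' : s ≠ x j := by simpa using hsne
  rw [slope_def_field]
  rcases lt_or_gt_of_ne hsne' with hlt | hgt
  · refine div_nonneg_iff.mpr (Or.inr ⟨?_, ?_⟩)
    · have := (hmono.monotoneOn) hsIcc hts hlt.le
      simpa using sub_nonpos.mpr this
    · simpa using sub_nonpos.mpr hlt.le
  · apply div_nonneg
    · have := (hmono.monotoneOn) hts hsIcc hgt.le
      simpa using sub_nonneg.mpr this
    · simpa using sub_nonneg.mpr hgt.le

end Stmt12Aux

namespace Stmt12Aux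

lemma le_W1dist_fst {d : ℕ} {S S' : (Fin d → ℝ) → Fin d → ℝ}
    (hS : Set.MapsTo S (cube d) (cube d)) (hS' : Set.MapsTo S' (cube d) (cube d))
    (j : Fin d) {x : Fin d → ℝ} (hx : x ∈ cube d) :
    |S x j - S' x j| ≤ W1dist d S S' := by
  have hbdd : ∀ j : Fin d, BddAbove (Set.range fun y : cube d =>
      |S (y : Fin d → ℝ) j - S' (y : Fin d → ℝ) j|) := by
    intro j
    refine ⟨2, ?_⟩
    rintro _ ⟨y, rfl⟩
    have h1 := (hS y.2) j
    have h2 := (hS' y.2) j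
    have h1' : |S (y : Fin d → ℝ) j| ≤ 1 := abs_le.mpr ⟨h1.1, h1.2⟩
    have h2' : |S' (y : Fin d → ℝ) j| ≤ 1 := abs_le.mpr ⟨h2.1, h2.2⟩
    calc |S (y : Fin d → ℝ) j - S' (y : Fin d → ℝ) j| ≤ _ := abs_sub _ _
      _ ≤ 2 := by linarith
  have h1 : |S x j - S' x j| ≤ ⨆ y : cube d, |S (y : Fin d → ℝ) j - S' (y : Fin d → ℝ) j| :=
    le_ciSup (hbdd j) (⟨x, hx⟩ : cube d)
  have h2 : (⨆ y : cube d, |S (y : Fin d → ℝ) j - S' (y : Fin d → ℝ) j|)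
      ≤ ⨆ j : Fin d, ⨆ y : cube d, |S (y : Fin d → ℝ) j - S' (y : Fin d → ℝ) j| :=
    le_ciSup (f := fun j : Fin d => ⨆ y : cube d, |S (y : Fin d → ℝ) j - S' (y : Fin d → ℝ) j|)
      (Set.Finite.bddAbove (Set.finite_range _)) j
  exact le_trans h1 (h2.trans (le_max_left _ _))

lemma le_W1dist_snd {d : ℕ} {S S' : (Fin d → ℝ) → Fin d → ℝ} {B1 B2 : ℝ}
    (h1 : ∀ (j i : Fin d), ∀ x ∈ cube d, |pd d (fun y => S y j) i x| ≤ B1)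
    (h2 : ∀ (j i : Fin d), ∀ x ∈ cube d, |pd d (fun y => S' y j) i x| ≤ B2)
    (j i : Fin d) {x : Fin d → ℝ} (hx : x ∈ cube d) :
    |pd d (fun y => S y j) i x - pd d (fun y => S' y j) i x| ≤ W1dist d S S' := by
  have hbdd : ∀ j i : Fin d, BddAbove (Set.range fun y : cube d =>
      |pd d (fun z => S z j) i (y : Fin d → ℝ) - pd d (fun z => S' z j) i (y : Fin d → ℝ)|) := by
    intro j i
    refine ⟨B1 + B2, ?_⟩
    rintro _ ⟨y, rfl⟩
    calc |pd d (fun z => S z j) i (y : Fin d → ℝ) - pd d (fun z => S' z j) i (y : Fin d → ℝ)|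
        ≤ _ := abs_sub _ _
      _ ≤ B1 + B2 := add_le_add (h1 j i _ y.2) (h2 j i _ y.2)
  have ha : |pd d (fun y => S y j) i x - pd d (fun y => S' y j) i x|
      ≤ ⨆ y : cube d, |pd d (fun z => S z j) i (y : Fin d → ℝ) -
          pd d (fun z => S' z j) i (y : Fin d → ℝ)| :=
    le_ciSup (hbdd j i) (⟨x, hx⟩ : cube d)
  have hb : (⨆ y : cube d, |pd d (fun z => S z j) i (y : Fin d → ℝ) -
        pd d (fun z => S' z j) i (y : Fin d → ℝ)|)
      ≤ ⨆ i : Fin d, ⨆ y : cube d, |pd d (fun z => S z j) i (y : Fin d → ℝ) -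
          pd d (fun z => S' z j) i (y : Fin d → ℝ)| :=
    le_ciSup (f := fun i : Fin d => ⨆ y : cube d, |pd d (fun z => S z j) i (y : Fin d → ℝ) -
      pd d (fun z => S' z j) i (y : Fin d → ℝ)|)
      (Set.Finite.bddAbove (Set.finite_range _)) i
  have hc : (⨆ i : Fin d, ⨆ y : cube d, |pd d (fun z => S z j) i (y : Fin d → ℝ) -
        pd d (fun z => S' z j) i (y : Fin d → ℝ)|)
      ≤ ⨆ j : Fin d, ⨆ i : Fin d, ⨆ y : cube d, |pd d (fun z => S z j) i (y : Fin d → ℝ) -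
          pd d (fun z => S' z j) i (y : Fin d → ℝ)| :=
    le_ciSup (f := fun j : Fin d => ⨆ i : Fin d, ⨆ y : cube d,
      |pd d (fun z => S z j) i (y : Fin d → ℝ) - pd d (fun z => S' z j) i (y : Fin d → ℝ)|)
      (Set.Finite.bddAbove (Set.finite_range _)) j
  exact ha.trans (hb.trans (hc.trans (le_max_right _ _)))

lemma abs_prod_sub_prod_le {ι : Type*} (s : Finset ι) (a b : ι → ℝ) {B w : ℝ}
    (hB : 1 ≤ B) (hw : 0 ≤ w)
    (ha : ∀ i ∈ s, |a i| ≤ B) (hb : ∀ i ∈ s, |b i| ≤ B)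
    (hab : ∀ i ∈ s, |a i - b i| ≤ w) :
    |∏ i ∈ s, a i - ∏ i ∈ s, b i| ≤ (s.card : ℝ) * B ^ s.card * w := by
  induction s using Finset.cons_induction with
  | empty => simp
  | cons i s his ih =>
    have hB0 : (0:ℝ) ≤ B := le_trans zero_le_one hB
    have ihs := ih (fun k hk => ha k (Finset.mem_cons_of_mem hk))
      (fun k hk => hb k (Finset.mem_cons_of_mem hk))
      (fun k hk => hab k (Finset.mem_cons_of_mem hk))
    have hmemi : i ∈ Finset.cons i s his := Finset.mem_cons_self i s
    have hQ : |∏ k ∈ s, b k| ≤ B ^ s.card := by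
      rw [Finset.abs_prod]
      calc ∏ k ∈ s, |b k|
          ≤ ∏ _k ∈ s, B := Finset.prod_le_prod (fun k _ => abs_nonneg _)
            (fun k hk => hb k (Finset.mem_cons_of_mem hk))
        _ = B ^ s.card := Finset.prod_const B
    rw [Finset.prod_cons, Finset.prod_cons]
    have key : a i * ∏ k ∈ s, a k - b i * ∏ k ∈ s, b k
        = a i * (∏ k ∈ s, a k - ∏ k ∈ s, b k) + (a i - b i) * ∏ k ∈ s, b k := by ring
    rw [key, Finset.card_cons]
    have h1 : |a i * (∏ k ∈ s, a k - ∏ k ∈ s, b k)| ≤ B * ((s.card : ℝ) * B ^ s.card * w) := by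
      rw [abs_mul]
      exact mul_le_mul (ha i hmemi) ihs (abs_nonneg _) hB0
    have h2 : |(a i - b i) * ∏ k ∈ s, b k| ≤ w * B ^ s.card := by
      rw [abs_mul]
      exact mul_le_mul (hab i hmemi) hQ (abs_nonneg _) hw
    have hpow : B ^ s.card ≤ B ^ (s.card + 1) :=
      pow_le_pow_right₀ hB (Nat.le_succ _)
    calc |a i * (∏ k ∈ s, a k - ∏ k ∈ s, b k) + (a i - b i) * ∏ k ∈ s, b k|
        ≤ _ := abs_add_le _ _
      _ ≤ B * ((s.card : ℝ) * B ^ s.card * w) + w * B ^ s.card := add_le_add h1 h2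
      _ ≤ ((s.card : ℝ) + 1) * B ^ (s.card + 1) * w := by
          have e1 : B * ((s.card:ℝ) * B ^ s.card * w) = (s.card:ℝ) * B ^ (s.card+1) * w := by
            rw [pow_succ]; ring
          have e2 : w * B ^ s.card ≤ w * B ^ (s.card+1) := mul_le_mul_of_nonneg_left hpow hw
          rw [e1]
          nlinarith [e2]
      _ = (↑(s.card + 1) : ℝ) * B ^ (s.card + 1) * w := by push_cast; ring

lemma abs_log_sub_log_le {a b m : ℝ} (hm : 0 < m) (ha : m ≤ a) (hb : m ≤ b) :
    |Real.log a - Real.log b| ≤ |a - b| / m := by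
  have key : ∀ u v : ℝ, m ≤ u → m ≤ v → v ≤ u → Real.log u - Real.log v ≤ (u - v) / m := by
    intro u v hu hv huv
    have hv0 : 0 < v := lt_of_lt_of_le hm hv
    have hu0 : 0 < u := lt_of_lt_of_le hm hu
    have h1 : Real.log u - Real.log v = Real.log (u / v) := (Real.log_div hu0.ne' hv0.ne').symm
    rw [h1]
    have h2 : Real.log (u / v) ≤ u / v - 1 := Real.log_le_sub_one_of_pos (by positivity)
    have h3 : u / v - 1 = (u - v) / v := by field_simp
    have h4 : (u - v) / v ≤ (u - v) / m :=
      div_le_div_of_nonneg_left (by linarith) hm hv  -- careful: need version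
    calc Real.log (u/v) ≤ u / v - 1 := h2
      _ = (u - v)/v := h3
      _ ≤ (u - v)/m := h4
  rcases le_total b a with h | h
  · rw [abs_of_nonneg (sub_nonneg.mpr ((Real.log_le_log_iff (lt_of_lt_of_le hm hb)
      (lt_of_lt_of_le hm ha)).mpr h)), abs_of_nonneg (sub_nonneg.mpr h)]
    exact key a b ha hb h
  · rw [abs_sub_comm, abs_sub_comm a b,
      abs_of_nonneg (sub_nonneg.mpr ((Real.log_le_log_iff (lt_of_lt_of_le hm ha)
      (lt_of_lt_of_le hm hb)).mpr h)), abs_of_nonneg (sub_nonneg.mpr h)]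
    exact key b a hb ha h

end Stmt12Aux

namespace Stmt12Aux

lemma real_mem_cNbhd {δ' : ℝ} (hδ' : 0 < δ') {t : ℝ} (ht : t ∈ Set.Icc (-1:ℝ) 1) :
    (t : ℂ) ∈ cNbhd δ' segC :=
  ⟨(t : ℂ), ⟨t, ht, rfl⟩, by simpa using hδ'⟩

lemma isOpen_cNbhd (δ' : ℝ) : IsOpen (cNbhd δ' segC) := by
  have h : cNbhd δ' segC = ⋃ y ∈ segC, Metric.ball y δ' := by
    ext z
    simp only [cNbhd, Set.mem_setOf_eq, Set.mem_iUnion, Metric.mem_ball, Complex.dist_eq]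
    tauto
  rw [h]
  exact isOpen_biUnion fun _ _ => Metric.isOpen_ball

lemma hol_lip_step {d : ℕ} (δ : Fin d → ℝ) (hδ : ∀ i, 0 < δ i) (L : ℝ) (hL : 0 ≤ L)
    (f : (Fin d → ℂ) → ℂ)
    (hdiff : DifferentiableOn ℂ f {z : Fin d → ℂ | ∀ i, z i ∈ cNbhd (δ i) segC})
    (hbound : ∀ z : Fin d → ℂ, (∀ i, z i ∈ cNbhd (δ i) segC) → ‖f z‖ ≤ L)
    {x : Fin d → ℝ} (hx : x ∈ cube d) (i : Fin d) {b : ℝ} (hb : b ∈ Set.Icc (-1:ℝ) 1) :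
    ‖f (fun i' => ((Function.update x i b i' : ℝ) : ℂ))
        - f (fun i' => ((x i' : ℝ) : ℂ))‖
      ≤ (2*L+1)/(δ i) * |b - x i| := by
  set c : Fin d → ℂ := fun i' => ((x i' : ℝ) : ℂ) with hc
  set ℓ : ℂ → (Fin d → ℂ) := Function.update c i with hℓ
  have hℓmem : ∀ z ∈ cNbhd (δ i) segC, ∀ i', ℓ z i' ∈ cNbhd (δ i') segC := by
    intro z hz i'
    rcases eq_or_ne i' i with h | h
    · subst h; simpa [hℓ, Function.update_self] using hz
    · rw [hℓ, Function.update_of_ne h]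
      exact real_mem_cNbhd (hδ i') (hx i')
  have hℓd : Differentiable ℂ ℓ := fun z => (hasDerivAt_update c i z).differentiableAt
  set φ : ℂ → ℂ := fun z => f (ℓ z) with hφ
  have hφdiff : DifferentiableOn ℂ φ (cNbhd (δ i) segC) :=
    hdiff.comp hℓd.differentiableOn (fun z hz => hℓmem z hz)
  have hU := isOpen_cNbhd (δ i)
  have hψ : ∀ t ∈ Set.Icc (-1:ℝ) 1,
      HasDerivWithinAt (fun s : ℝ => φ (s:ℂ)) (deriv φ (t:ℂ)) (Set.Icc (-1:ℝ) 1) t := by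
    intro t ht
    have hat : DifferentiableAt ℂ φ (t:ℂ) :=
      hφdiff.differentiableAt (hU.mem_nhds (real_mem_cNbhd (hδ i) ht))
    exact (hat.hasDerivAt.comp_ofReal).hasDerivWithinAt
  have hbnd : ∀ t ∈ Set.Icc (-1:ℝ) 1, ‖deriv φ (t:ℂ)‖ ≤ (2*L+1)/(δ i) := by
    intro t ht
    have hball : Metric.ball (t:ℂ) (δ i) ⊆ cNbhd (δ i) segC := by
      intro z hz
      exact ⟨(t:ℂ), ⟨t, ht, rfl⟩, by simpa [Complex.dist_eq] using hz⟩
    have hmaps : Set.MapsTo φ (Metric.ball (t:ℂ) (δ i)) (Metric.ball (φ (t:ℂ)) (2*L+1)) := by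
      intro z hz
      have h1 : ‖φ z‖ ≤ L := hbound _ (hℓmem z (hball hz))
      have h2 : ‖φ (t:ℂ)‖ ≤ L :=
        hbound _ (hℓmem _ (real_mem_cNbhd (hδ i) ht))
      have : dist (φ z) (φ (t:ℂ)) ≤ ‖φ z‖ + ‖φ (t:ℂ)‖ := dist_le_norm_add_norm _ _
      rw [Metric.mem_ball]
      calc dist (φ z) (φ (t:ℂ)) ≤ ‖φ z‖ + ‖φ (t:ℂ)‖ := this
        _ ≤ L + L := add_le_add h1 h2
        _ < 2*L+1 := by linarith
    exact Complex.norm_deriv_le_div_of_mapsTo_ball (hφdiff.mono hball) (hmaps.mono_right Metric.ball_subset_closedBall) (hδ i)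
  have hmain := (convex_Icc (-1:ℝ) 1).norm_image_sub_le_of_norm_hasDerivWithin_le
    hψ hbnd (hx i) hb
  have e1 : φ ((b:ℝ):ℂ) = f (fun i' => ((Function.update x i b i' : ℝ) : ℂ)) := by
    show f (Function.update c i ((b:ℝ):ℂ)) = _
    congr 1
    funext i'
    rcases eq_or_ne i' i with h | h
    · subst h; simp [Function.update_self]
    · simp [hc, Function.update_of_ne h]
  have e2 : φ ((x i : ℝ):ℂ) = f (fun i' => ((x i' : ℝ) : ℂ)) := by
    show f (Function.update c i ((x i : ℝ):ℂ)) = _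
    rw [show ((x i : ℝ):ℂ) = c i from rfl, Function.update_eq_self]
  have hfin : ‖φ ((b:ℝ):ℂ) - φ ((x i:ℝ):ℂ)‖ ≤ (2*L+1)/(δ i) * ‖b - x i‖ := hmain
  rw [e1, e2] at hfin
  simpa [Real.norm_eq_abs] using hfin

lemma hol_lipschitz {d : ℕ} (δ : Fin d → ℝ) (hδ : ∀ i, 0 < δ i) (L : ℝ) (hL : 0 ≤ L)
    (f : (Fin d → ℂ) → ℂ)
    (hdiff : DifferentiableOn ℂ f {z : Fin d → ℂ | ∀ i, z i ∈ cNbhd (δ i) segC})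
    (hbound : ∀ z : Fin d → ℂ, (∀ i, z i ∈ cNbhd (δ i) segC) → ‖f z‖ ≤ L)
    {u v : Fin d → ℝ} (hu : u ∈ cube d) (hv : v ∈ cube d) :
    ‖f (fun i => ((u i : ℝ) : ℂ)) - f (fun i => ((v i : ℝ) : ℂ))‖
      ≤ ∑ i : Fin d, (2*L+1)/(δ i) * |u i - v i| := by
  classical
  set H : ℕ → (Fin d → ℝ) := fun k => fun i => if (i:ℕ) < k then v i else u i with hH
  have hHmem : ∀ k, H k ∈ cube d := by
    intro k i
    by_cases h : (i:ℕ) < k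
    · simpa [hH, h] using hv i
    · simpa [hH, h] using hu i
  have hH0 : H 0 = u := by funext i; simp [hH]
  have hHd : H d = v := by funext i; simp [hH, i.isLt]
  set F : ℕ → ℂ := fun k => f (fun i => ((H k i : ℝ) : ℂ)) with hF
  set c' : ℕ → ℝ := fun k => if h : k < d then
      (2*L+1)/(δ ⟨k, h⟩) * |u ⟨k, h⟩ - v ⟨k, h⟩| else 0 with hc'
  have hstep : ∀ k ∈ Finset.range d, dist (F k) (F (k+1)) ≤ c' k := by
    intro k hk
    rw [Finset.mem_range] at hk
    set ik : Fin d := ⟨k, hk⟩ with hik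
    have hupd : H (k+1) = Function.update (H k) ik (v ik) := by
      funext i
      rcases eq_or_ne i ik with h | h
      · subst h
        simp [hH, Function.update_self, hik, Nat.lt_succ_self]
      · have hne : (i : ℕ) ≠ k := fun hc => h (by rw [hik]; exact Fin.ext hc)
        have : (i:ℕ) < k + 1 ↔ (i:ℕ) < k := by omega
        simp [hH, Function.update_of_ne h, this]
    have hHkik : H k ik = u ik := by simp [hH, hik]
    have hvmem : v ik ∈ Set.Icc (-1:ℝ) 1 := hv ik
    have hlip := hol_lip_step δ hδ L hL f hdiff hbound (hHmem k) ik hvmem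
    have hFk1 : F (k+1) = f fun i' => ((Function.update (H k) ik (v ik) i' : ℝ):ℂ) := by
      simp only [hF, hupd]
    calc dist (F k) (F (k+1))
        = ‖F (k+1) - F k‖ := by
          rw [dist_eq_norm, norm_sub_rev]
      _ ≤ (2*L+1)/(δ ik) * |v ik - H k ik| := by
          have hFk : F k = f fun i' => ((H k i' : ℝ):ℂ) := by simp only [hF]
          rw [hFk1, hFk]
          exact hlip
      _ = c' k := by
          rw [hHkik, abs_sub_comm]
          simp only [hc', dif_pos hk]
          rfl
  have htel : dist (F 0) (F d) ≤ ∑ k ∈ Finset.range d, dist (F k) (F (k+1)) :=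
    dist_le_range_sum_dist F d
  have hsum : ∑ k ∈ Finset.range d, c' k = ∑ i : Fin d, (2*L+1)/(δ i) * |u i - v i| := by
    rw [← Fin.sum_univ_eq_sum_range c' d]
    apply Finset.sum_congr rfl
    intro i _
    have hi : (i:ℕ) < d := i.isLt
    simp only [hc', dif_pos hi, Fin.eta]
  have hF0 : F 0 = f fun i => ((u i : ℝ):ℂ) := by simp only [hF, hH0]
  have hFd : F d = f fun i => ((v i : ℝ):ℂ) := by simp only [hF, hHd]
  calc ‖f (fun i => ((u i : ℝ) : ℂ)) - f (fun i => ((v i : ℝ) : ℂ))‖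
      = dist (F 0) (F d) := by rw [hF0, hFd, Complex.dist_eq]
    _ ≤ ∑ k ∈ Finset.range d, dist (F k) (F (k+1)) := htel
    _ ≤ ∑ k ∈ Finset.range d, c' k := Finset.sum_le_sum hstep
    _ = _ := hsum

lemma mu1_prob : IsProbabilityMeasure mu1 := by
    constructor
    rw [mu1, Measure.smul_apply, Measure.restrict_apply MeasurableSet.univ, Set.univ_inter,
      Real.volume_Icc, show (1:ℝ) - -1 = 2 by norm_num]
    rw [ENNReal.ofReal_ofNat, smul_eq_mul]
    exact ENNReal.inv_mul_cancel two_ne_zero ENNReal.ofNat_ne_top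

lemma muD_prob (d : ℕ) : IsProbabilityMeasure (muD d) := by
  haveI := mu1_prob
  rw [muD]
  infer_instance

end Stmt12Aux

namespace Stmt12Aux

lemma ae_mem_cube (d : ℕ) : ∀ᵐ x ∂(muD d), x ∈ cube d := by
  haveI := muD_prob d
  haveI := mu1_prob
  have hmeas : MeasurableSet (cube d) := by
    rw [cube_eq]; exact MeasurableSet.univ_pi (fun _ => measurableSet_Icc)
  have hmu1 : mu1 (Set.Icc (-1:ℝ) 1) = 1 := by
    rw [mu1, Measure.smul_apply, Measure.restrict_apply measurableSet_Icc, Set.inter_self,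
      Real.volume_Icc, show (1:ℝ) - -1 = 2 by norm_num, ENNReal.ofReal_ofNat, smul_eq_mul]
    exact ENNReal.inv_mul_cancel two_ne_zero ENNReal.ofNat_ne_top
  have hone : muD d (cube d) = 1 := by
    rw [cube_eq, muD, Measure.pi_pi]
    simp [hmu1]
  have hcompl : muD d (cube d)ᶜ = 0 := (prob_compl_eq_zero_iff hmeas).mpr hone
  rw [MeasureTheory.ae_iff]
  exact hcompl

lemma integral_le_of_bound {d : ℕ} (f : (Fin d → ℝ) → ℝ) {b : ℝ}
    (hb : ∀ x ∈ cube d, |f x| ≤ b) : ∫ x, f x ∂(muD d) ≤ b := by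
  haveI := muD_prob d
  have hae : ∀ᵐ x ∂(muD d), ‖f x‖ ≤ b :=
    (ae_mem_cube d).mono (fun x hx => by simpa [Real.norm_eq_abs] using hb x hx)
  have h := norm_integral_le_of_norm_le_const hae
  rw [probReal_univ, mul_one, Real.norm_eq_abs] at h
  exact (le_abs_self _).trans h

lemma re_mem_of_A {M L : ℝ} (hM : 0 < M) {z : ℂ} (him : z.im = 0) (hre : 0 < z.re)
    (habs1 : M ≤ ‖z‖) (habs2 : ‖z‖ ≤ L) : M ≤ z.re ∧ z.re ≤ L := by
  have hz : z = ((z.re : ℝ) : ℂ) := Complex.ext rfl (by simp [him])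
  rw [hz, Complex.norm_real, Real.norm_eq_abs, abs_of_pos hre] at habs1 habs2
  exact ⟨habs1, habs2⟩

end Stmt12Aux

namespace Stmt12Aux

lemma sqrt_sub_sq_le {g p m K : ℝ} (hm : 0 < m) (hg : m ≤ g) (hp : m ≤ p) (hgp : |g - p| ≤ K) :
    (Real.sqrt g - Real.sqrt p)^2 ≤ K^2/(4*m) := by
  have hg0 : (0:ℝ) ≤ g := le_trans hm.le hg
  have hp0 : (0:ℝ) ≤ p := le_trans hm.le hp
  have hsg := Real.sqrt_le_sqrt hg
  have hsp := Real.sqrt_le_sqrt hp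
  have hsm : 0 < Real.sqrt m := Real.sqrt_pos.mpr hm
  have hid : (Real.sqrt g - Real.sqrt p) * (Real.sqrt g + Real.sqrt p) = g - p := by
    nlinarith [Real.sq_sqrt hg0, Real.sq_sqrt hp0]
  have h2 : (Real.sqrt g - Real.sqrt p)^2 * (Real.sqrt g + Real.sqrt p)^2 = (g-p)^2 := by
    rw [← mul_pow, hid]
  have h3 : 4*m ≤ (Real.sqrt g + Real.sqrt p)^2 := by
    nlinarith [Real.sq_sqrt hm.le]
  have h4 : (g-p)^2 ≤ K^2 := by
    nlinarith [abs_nonneg (g-p), sq_abs (g-p)]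
  rw [le_div_iff₀ (by positivity)]
  nlinarith [sq_nonneg (Real.sqrt g - Real.sqrt p),
    mul_le_mul_of_nonneg_left h3 (sq_nonneg (Real.sqrt g - Real.sqrt p))]

end Stmt12Aux

namespace Stmt12Aux

lemma sq_sub_sqrt_le {g p M₁ L : ℝ} (hg0 : 0 ≤ g) (hgM : g ≤ M₁) (hp0 : 0 ≤ p) (hpL : p ≤ L) :
    (Real.sqrt g - Real.sqrt p)^2 ≤ 2*M₁ + 2*L := by
  nlinarith [Real.sq_sqrt hg0, Real.sq_sqrt hp0, sq_nonneg (Real.sqrt g + Real.sqrt p)]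

end Stmt12Aux

set_option maxHeartbeats 2000000
open Stmt12Aux

/-- convergence of the pushforward measures.  In the setting of the
rational-approximation proposition (Assumption (A), `ξ_j = 1 + C₇δ_j`,
`β = ((d-1)!·∏_j log ξ_j)^{1/d}`, `N_ε = Σ_j |Λ_{j,ε}|`), if `S` is the inverse
Knothe–Rosenblatt transport (so `f_ρ(S(x))·det dS(x) = f_π(x)`) and `(S̃_ε)` are monotone
triangular `C¹` bijections with `‖S − S̃_ε‖_{W^{1,∞}} ≤ C' exp(−τβN_ε^{1/d})`, then the
Hellinger and total-variation distances and the KL divergence of `S̃_ε^♯ρ` and `π` decay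
at the same exponential rate. -/
theorem stmt12 (d : ℕ) (hd : 0 < d) (M L : ℝ) (hM : 0 < M) (hML : M ≤ L)
    (δ : Fin d → ℝ) (hδ : ∀ j, 0 < δ j) (C₆ C₇ : ℝ) (hC₆ : 0 < C₆) (hC₇ : 0 < C₇)
    (fρ fπ : (Fin d → ℂ) → ℂ)
    -- Assumption (A) for both densities
    (hA : ∀ f : (Fin d → ℂ) → ℂ, f = fρ ∨ f = fπ →
      (∀ x ∈ cube d,
        (f (fun i => ((x i : ℝ) : ℂ))).im = 0 ∧ 0 < (f (fun i => ((x i : ℝ) : ℂ))).re) ∧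
      (∫ x : Fin d → ℝ, (f (fun i => ((x i : ℝ) : ℂ))).re ∂(muD d) = 1) ∧
      DifferentiableOn ℂ f {z | ∀ i : Fin d, z i ∈ cNbhd (δ i) segC} ∧
      (∀ z : Fin d → ℂ, (∀ i : Fin d, z i ∈ cNbhd (δ i) segC) →
        M ≤ ‖f z‖ ∧ ‖f z‖ ≤ L) ∧
      (∀ x ∈ cube d, ∀ y : Fin d → ℂ, (∀ i : Fin d, ‖y i‖ < δ i) →
        ‖f (fun i => ((x i : ℝ) : ℂ) + y i) - f (fun i => ((x i : ℝ) : ℂ))‖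
          ≤ C₆) ∧
      (∀ m : Fin d, ∀ x ∈ cube d, ∀ y : Fin d → ℂ,
        (∀ i : Fin d, i < m → ‖y i‖ < δ i) →
        (∀ i : Fin d, ¬i < m → y i = 0) →
        ‖f (fun i => ((x i : ℝ) : ℂ) + y i) - f (fun i => ((x i : ℝ) : ℂ))‖
          ≤ C₆ * δ m))
    -- `S` is the (triangular, monotone, C¹) inverse transport: `S^♯ρ = π`
    (S : (Fin d → ℝ) → Fin d → ℝ)
    (hSmap : Set.MapsTo S (cube d) (cube d))
    (hStri : ∀ j : Fin d, ∀ x y : Fin d → ℝ, (∀ i ≤ j, x i = y i) → S x j = S y j)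
    (hSmono : ∀ j : Fin d, ∀ x ∈ cube d,
      StrictMonoOn (fun t => S (Function.update x j t) j) (Set.Icc (-1 : ℝ) 1) ∧
      Set.BijOn (fun t => S (Function.update x j t) j)
        (Set.Icc (-1 : ℝ) 1) (Set.Icc (-1 : ℝ) 1))
    (hSreg : ContDiffOn ℝ 1 S (cube d))
    (hStrans : ∀ x ∈ cube d,
      (fρ (fun i => ((S x i : ℝ) : ℂ))).re * detd d S x = (fπ (fun i => ((x i : ℝ) : ℂ))).re)
    -- the family `S̃_ε` of monotone triangular rational bijections
    (St : ℝ → (Fin d → ℝ) → Fin d → ℝ)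
    (hSt : ∀ ε : ℝ, 0 < ε →
      Set.MapsTo (St ε) (cube d) (cube d) ∧
      (∀ j : Fin d, ∀ x y : Fin d → ℝ, (∀ i ≤ j, x i = y i) → St ε x j = St ε y j) ∧
      (∀ j : Fin d, ∀ x ∈ cube d,
        StrictMonoOn (fun t => St ε (Function.update x j t) j) (Set.Icc (-1 : ℝ) 1) ∧
        Set.BijOn (fun t => St ε (Function.update x j t) j)
          (Set.Icc (-1 : ℝ) 1) (Set.Icc (-1 : ℝ) 1)) ∧
      ContDiffOn ℝ 1 (St ε) (cube d))
    -- `‖S − S̃_ε‖_{W^{1,∞}} ≤ C' exp(−τ β N_ε^{1/d})`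
    (happrox : ∀ τ : ℝ, 0 < τ → τ < 1 → ∃ C' : ℝ, 0 < C' ∧ ∀ ε : ℝ, 0 < ε →
      W1dist d S (St ε) ≤
        C' * Real.exp (-(τ *
          (((Nat.factorial (d - 1) : ℝ) *
              ∏ i : Fin d, Real.log (1 + C₇ * δ i)) ^ ((d : ℝ)⁻¹)) *
          ((∑ j : Fin d, (Lam d (fun i => 1 + C₇ * δ i) j ε).ncard : ℕ) : ℝ)
            ^ ((d : ℝ)⁻¹)))) :
    ∀ τ : ℝ, 0 < τ → τ < 1 → ∃ C : ℝ, 0 < C ∧ ∀ ε : ℝ, 0 < ε →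
      -- Hellinger distance
      (Real.sqrt (2⁻¹ * ∫ x,
          (Real.sqrt ((fρ (fun i => ((St ε x i : ℝ) : ℂ))).re * detd d (St ε) x) -
            Real.sqrt ((fπ (fun i => ((x i : ℝ) : ℂ))).re)) ^ 2 ∂(muD d)) ≤
        C * Real.exp (-(τ *
          (((Nat.factorial (d - 1) : ℝ) *
              ∏ i : Fin d, Real.log (1 + C₇ * δ i)) ^ ((d : ℝ)⁻¹)) *
          ((∑ j : Fin d, (Lam d (fun i => 1 + C₇ * δ i) j ε).ncard : ℕ) : ℝ)
            ^ ((d : ℝ)⁻¹)))) ∧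
      -- total variation distance
      (2⁻¹ * (∫ x,
          |(fρ (fun i => ((St ε x i : ℝ) : ℂ))).re * detd d (St ε) x -
            (fπ (fun i => ((x i : ℝ) : ℂ))).re| ∂(muD d)) ≤
        C * Real.exp (-(τ *
          (((Nat.factorial (d - 1) : ℝ) *
              ∏ i : Fin d, Real.log (1 + C₇ * δ i)) ^ ((d : ℝ)⁻¹)) *
          ((∑ j : Fin d, (Lam d (fun i => 1 + C₇ * δ i) j ε).ncard : ℕ) : ℝ)
            ^ ((d : ℝ)⁻¹)))) ∧
      -- Kullback–Leibler divergence
      ((∫ x,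
          (fρ (fun i => ((St ε x i : ℝ) : ℂ))).re * detd d (St ε) x *
            Real.log ((fρ (fun i => ((St ε x i : ℝ) : ℂ))).re * detd d (St ε) x /
              (fπ (fun i => ((x i : ℝ) : ℂ))).re) ∂(muD d)) ≤
        C * Real.exp (-(τ *
          (((Nat.factorial (d - 1) : ℝ) *
              ∏ i : Fin d, Real.log (1 + C₇ * δ i)) ^ ((d : ℝ)⁻¹)) *
          ((∑ j : Fin d, (Lam d (fun i => 1 + C₇ * δ i) j ε).ncard : ℕ) : ℝ)
            ^ ((d : ℝ)⁻¹)))) := by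
  intro τ hτ0 hτ1
  classical
  obtain ⟨C', hC'0, hC'⟩ := happrox τ hτ0 hτ1
  obtain ⟨hρpos, -, hρdiff, hρbound, -, -⟩ := hA fρ (Or.inl rfl)
  obtain ⟨hπpos, -, hπdiff, hπbound, -, -⟩ := hA fπ (Or.inr rfl)
  have hL0 : 0 < L := lt_of_lt_of_le hM hML
  obtain ⟨B, hB1, hBb⟩ := pd_bound hSreg
  have hB0 : 0 < B := lt_of_lt_of_le one_pos hB1
  have hρval : ∀ x ∈ cube d,
      M ≤ (fρ (fun i => ((x i : ℝ) : ℂ))).re ∧ (fρ (fun i => ((x i : ℝ) : ℂ))).re ≤ L := by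
    intro x hx
    have hmem : ∀ i, (fun i => ((x i : ℝ) : ℂ)) i ∈ cNbhd (δ i) segC :=
      fun i => real_mem_cNbhd (hδ i) (hx i)
    obtain ⟨h1, h2⟩ := hρbound _ hmem
    obtain ⟨hi, hr⟩ := hρpos x hx
    exact re_mem_of_A hM hi hr h1 h2
  have hπval : ∀ x ∈ cube d,
      M ≤ (fπ (fun i => ((x i : ℝ) : ℂ))).re ∧ (fπ (fun i => ((x i : ℝ) : ℂ))).re ≤ L := by
    intro x hx
    have hmem : ∀ i, (fun i => ((x i : ℝ) : ℂ)) i ∈ cNbhd (δ i) segC :=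
      fun i => real_mem_cNbhd (hδ i) (hx i)
    obtain ⟨h1, h2⟩ := hπbound _ hmem
    obtain ⟨hi, hr⟩ := hπpos x hx
    exact re_mem_of_A hM hi hr h1 h2
  set Kρ : ℝ := ∑ i : Fin d, (2*L+1)/(δ i) with hKρdef
  have hKρ0 : 0 ≤ Kρ := Finset.sum_nonneg fun i _ => by
    have h := hδ i; positivity
  set m₀ : ℝ := (M/L)/B^(d-1) with hm₀def
  have hm₀ : 0 < m₀ := by positivity
  set B' : ℝ := B + C' with hB'def
  have hB'1 : 1 ≤ B' := by rw [hB'def]; linarith only [hB1, hC'0]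
  have hB'0 : 0 < B' := lt_of_lt_of_le one_pos hB'1
  have hBB' : B ≤ B' := by rw [hB'def]; linarith only [hC'0]
  set M₁ : ℝ := L * B'^d with hM₁def
  have hM₁0 : 0 < M₁ := by positivity
  set Kg : ℝ := L * ((d:ℝ) * B'^d) + Kρ * B'^d with hKgdef
  have hKg0 : 0 ≤ Kg := by positivity
  set m₁ : ℝ := M * (m₀/2)^d with hm₁def
  have hm₁0 : 0 < m₁ := by positivity
  set m₂ : ℝ := min m₁ M with hm₂def
  have hm₂0 : 0 < m₂ := lt_min hm₁0 hM
  set KLc : ℝ := 1 + M₁^2 + M₁*(|Real.log M| + |Real.log L|) with hKLcdef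
  have hKLc0 : 0 ≤ KLc := by positivity
  set CTV : ℝ := Kg*C' + (M₁+L)*(2*C'/m₀) with hCTVdef
  have hCTV0 : 0 ≤ CTV := by positivity
  set CH : ℝ := Kg*C'/Real.sqrt (8*m₂) + Real.sqrt (M₁+L)*(2*C'/m₀) with hCHdef
  have hCH0 : 0 ≤ CH := by positivity
  set CKL : ℝ := (M₁*Kg/m₂)*C' + KLc*(2*C'/m₀) with hCKLdef
  have hCKL0 : 0 ≤ CKL := by positivity
  set C : ℝ := max (max CTV CH) (max CKL 1) with hCdef
  have hC1 : (1:ℝ) ≤ C := le_trans (le_max_right CKL 1) (le_max_right _ _)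
  have hC0 : 0 < C := lt_of_lt_of_le one_pos hC1
  have hCTVle : CTV ≤ C := le_trans (le_max_left _ _) (le_max_left _ _)
  have hCHle : CH ≤ C := le_trans (le_max_right _ _) (le_max_left _ _)
  have hCKLle : CKL ≤ C := le_trans (le_max_left _ _) (le_max_right _ _)
  refine ⟨C, hC0, ?_⟩
  intro ε hε
  obtain ⟨hStmap, hSttri, hStmono, hStreg⟩ := hSt ε hε
  obtain ⟨Bt, hBt1, hBtb⟩ := pd_bound hStreg
  set Eexp : ℝ := Real.exp (-(τ *
      (((Nat.factorial (d - 1) : ℝ) *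
          ∏ i : Fin d, Real.log (1 + C₇ * δ i)) ^ ((d : ℝ)⁻¹)) *
      ((∑ j : Fin d, (Lam d (fun i => 1 + C₇ * δ i) j ε).ncard : ℕ) : ℝ)
        ^ ((d : ℝ)⁻¹))) with hEdef
  have hE0 : 0 < Eexp := Real.exp_pos _
  have hE1 : Eexp ≤ 1 := by
    rw [hEdef, Real.exp_le_one_iff]
    have h1 : 0 ≤ ((Nat.factorial (d - 1) : ℝ) * ∏ i : Fin d, Real.log (1 + C₇ * δ i)) :=
      mul_nonneg (Nat.cast_nonneg _) (Finset.prod_nonneg fun i _ =>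
        Real.log_nonneg (by linarith only [mul_pos hC₇ (hδ i)]))
    have h2 : (0:ℝ) ≤ ((Nat.factorial (d - 1) : ℝ) *
        ∏ i : Fin d, Real.log (1 + C₇ * δ i)) ^ ((d : ℝ)⁻¹) := Real.rpow_nonneg h1 _
    have h3 : (0:ℝ) ≤ ((∑ j : Fin d, (Lam d (fun i => 1 + C₇ * δ i) j ε).ncard : ℕ) : ℝ)
        ^ ((d : ℝ)⁻¹) := Real.rpow_nonneg (Nat.cast_nonneg _) _
    have h4 := mul_nonneg (mul_nonneg hτ0.le h2) h3
    linarith only [h4]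
  set w : ℝ := W1dist d S (St ε) with hwdef
  have hwE : w ≤ C' * Eexp := by
    have h := hC' ε hε
    rw [← hwdef, ← hEdef] at h
    exact h
  have hw0 : 0 ≤ w :=
    le_trans (abs_nonneg _) (le_W1dist_fst hSmap hStmap ⟨0, hd⟩ (zero_mem_cube d))
  have hwC' : w ≤ C' := le_trans hwE (by
    calc C' * Eexp ≤ C' * 1 := mul_le_mul_of_nonneg_left hE1 hC'0.le
      _ = C' := mul_one C')
  clear_value Kρ m₀ B' M₁ Kg m₁ m₂ KLc CTV CH CKL C Eexp w
  -- pointwise facts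
  have hpdS0 : ∀ j : Fin d, ∀ x ∈ cube d, 0 ≤ pd d (fun y => S y j) j x :=
    fun j x hx => pd_nonneg hSreg j hx (hSmono j x hx).1
  have hpdSt0 : ∀ j : Fin d, ∀ x ∈ cube d, 0 ≤ pd d (fun y => St ε y j) j x :=
    fun j x hx => pd_nonneg hStreg j hx (hStmono j x hx).1
  have hpdiff : ∀ j : Fin d, ∀ x ∈ cube d,
      |pd d (fun y => S y j) j x - pd d (fun y => St ε y j) j x| ≤ w :=
    by intro j x hx; rw [hwdef]; exact le_W1dist_snd hBb hBtb j j hx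
  have hfdiff1 : ∀ x ∈ cube d, ∀ i, |St ε x i - S x i| ≤ w := by
    intro x hx i
    have h := le_W1dist_fst hSmap hStmap i hx
    rwa [abs_sub_comm, ← hwdef] at h
  have hdetS : ∀ x ∈ cube d, M / L ≤ detd d S x ∧ detd d S x ≤ B^d := by
    intro x hx
    have hSx := hSmap hx
    have htrans := hStrans x hx
    obtain ⟨hρ1, hρ2⟩ := hρval (S x) hSx
    obtain ⟨hπ1, hπ2⟩ := hπval x hx
    have hρp : (0:ℝ) < (fρ (fun i => ((S x i : ℝ) : ℂ))).re := lt_of_lt_of_le hM hρ1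
    constructor
    · have hdet : detd d S x = (fπ (fun i => ((x i : ℝ) : ℂ))).re /
          (fρ (fun i => ((S x i : ℝ) : ℂ))).re := by
        rw [eq_div_iff hρp.ne']
        linarith only [htrans]
      rw [hdet]
      calc M / L ≤ M / (fρ (fun i => ((S x i : ℝ) : ℂ))).re :=
            div_le_div_of_nonneg_left hM.le hρp hρ2
        _ ≤ (fπ (fun i => ((x i : ℝ) : ℂ))).re / (fρ (fun i => ((S x i : ℝ) : ℂ))).re := by
            gcongr
    · calc detd d S x = ∏ j : Fin d, pd d (fun y => S y j) j x := rfl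
        _ ≤ ∏ _j : Fin d, B := Finset.prod_le_prod (fun j _ => hpdS0 j x hx)
            (fun j _ => le_of_abs_le (hBb j j x hx))
        _ = B ^ d := by simp [Finset.prod_const]
  have hpdSm₀ : ∀ j : Fin d, ∀ x ∈ cube d, m₀ ≤ pd d (fun y => S y j) j x := by
    intro j x hx
    have hdet := (hdetS x hx).1
    have hprod : detd d S x = pd d (fun y => S y j) j x *
        ∏ i ∈ Finset.univ.erase j, pd d (fun y => S y i) i x :=
      (Finset.mul_prod_erase Finset.univ _ (Finset.mem_univ j)).symm
    have hrest : ∏ i ∈ Finset.univ.erase j, pd d (fun y => S y i) i x ≤ B^(d-1) := by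
      calc ∏ i ∈ Finset.univ.erase j, pd d (fun y => S y i) i x
          ≤ ∏ _i ∈ Finset.univ.erase j, B := Finset.prod_le_prod
            (fun i _ => hpdS0 i x hx) (fun i _ => le_of_abs_le (hBb i i x hx))
        _ = B ^ (Finset.univ.erase j).card := Finset.prod_const B
        _ = B ^ (d-1) := by
            rw [Finset.card_erase_of_mem (Finset.mem_univ j), Finset.card_univ, Fintype.card_fin]
    have h1 : M / L ≤ pd d (fun y => S y j) j x * B^(d-1) := by
      refine hdet.trans ?_
      rw [hprod]
      exact mul_le_mul_of_nonneg_left hrest (hpdS0 j x hx)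
    rw [hm₀def, div_le_iff₀ (by positivity)]
    exact h1
  have hpdStB' : ∀ j : Fin d, ∀ x ∈ cube d, |pd d (fun y => St ε y j) j x| ≤ B' := by
    intro j x hx
    have h := hpdiff j x hx
    have h2 := hBb j j x hx
    have h3 : |pd d (fun y => St ε y j) j x| - |pd d (fun y => S y j) j x|
        ≤ |pd d (fun y => St ε y j) j x - pd d (fun y => S y j) j x| :=
      abs_sub_abs_le_abs_sub _ _
    rw [abs_sub_comm] at h
    rw [hB'def]
    linarith only [h, h2, h3, hwC']
  have hdetStdiff : ∀ x ∈ cube d,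
      |detd d (St ε) x - detd d S x| ≤ (d:ℝ) * B'^d * w := by
    intro x hx
    have h := abs_prod_sub_prod_le Finset.univ
      (fun j => pd d (fun y => St ε y j) j x) (fun j => pd d (fun y => S y j) j x)
      hB'1 hw0 (fun j _ => hpdStB' j x hx)
      (fun j _ => le_trans (hBb j j x hx) hBB')
      (fun j _ => by rw [abs_sub_comm]; exact hpdiff j x hx)
    simpa [detd, Finset.card_univ] using h
  have hdetSt : ∀ x ∈ cube d, 0 ≤ detd d (St ε) x ∧ detd d (St ε) x ≤ B'^d := by
    intro x hx
    constructor
    · exact Finset.prod_nonneg fun j _ => hpdSt0 j x hx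
    · calc detd d (St ε) x = ∏ j : Fin d, pd d (fun y => St ε y j) j x := rfl
        _ ≤ ∏ _j : Fin d, B' := Finset.prod_le_prod (fun j _ => hpdSt0 j x hx)
            (fun j _ => le_of_abs_le (hpdStB' j x hx))
        _ = B' ^ d := by simp [Finset.prod_const]
  have hgval : ∀ x ∈ cube d,
      0 ≤ (fρ (fun i => ((St ε x i : ℝ) : ℂ))).re * detd d (St ε) x ∧
      (fρ (fun i => ((St ε x i : ℝ) : ℂ))).re * detd d (St ε) x ≤ M₁ := by
    intro x hx
    have hStx := hStmap hx
    obtain ⟨h1, h2⟩ := hρval (St ε x) hStx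
    obtain ⟨hd0, hdB⟩ := hdetSt x hx
    constructor
    · exact mul_nonneg (by linarith only [h1, hM]) hd0
    · rw [hM₁def]
      exact mul_le_mul h2 hdB hd0 hL0.le
  have hgp : ∀ x ∈ cube d,
      |(fρ (fun i => ((St ε x i : ℝ) : ℂ))).re * detd d (St ε) x -
        (fπ (fun i => ((x i : ℝ) : ℂ))).re| ≤ Kg * w := by
    intro x hx
    have hSx := hSmap hx
    have hStx := hStmap hx
    have htrans := hStrans x hx
    obtain ⟨ha1M, ha1L⟩ := hρval (St ε x) hStx
    obtain ⟨hb1M, hb1L⟩ := hρval (S x) hSx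
    have hlip := hol_lipschitz δ hδ L hL0.le fρ hρdiff (fun z hz => (hρbound z hz).2) hStx hSx
    have hlip2 : ‖fρ (fun i => ((St ε x i : ℝ) : ℂ)) -
        fρ (fun i => ((S x i : ℝ) : ℂ))‖ ≤ Kρ * w := by
      refine hlip.trans ?_
      rw [hKρdef, Finset.sum_mul]
      refine Finset.sum_le_sum fun i _ => ?_
      have h1 := hfdiff1 x hx i
      have h2 : (0:ℝ) ≤ (2*L+1)/(δ i) := by
        have := hδ i; positivity
      exact mul_le_mul_of_nonneg_left h1 h2
    have hrediff : |(fρ (fun i => ((St ε x i : ℝ) : ℂ))).re -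
        (fρ (fun i => ((S x i : ℝ) : ℂ))).re| ≤ Kρ * w := by
      refine le_trans ?_ hlip2
      rw [← Complex.sub_re]
      exact Complex.abs_re_le_norm _
    have hdd := hdetStdiff x hx
    obtain ⟨hdS1, hdS2⟩ := hdetS x hx
    have hdSabs : |detd d S x| ≤ B'^d := by
      rw [abs_of_nonneg (le_trans (by positivity) hdS1)]
      exact le_trans hdS2 (pow_le_pow_left₀ hB0.le hBB' d)
    have key : (fρ (fun i => ((St ε x i : ℝ) : ℂ))).re * detd d (St ε) x -
        (fπ (fun i => ((x i : ℝ) : ℂ))).re =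
        (fρ (fun i => ((St ε x i : ℝ) : ℂ))).re * (detd d (St ε) x - detd d S x) +
        ((fρ (fun i => ((St ε x i : ℝ) : ℂ))).re - (fρ (fun i => ((S x i : ℝ) : ℂ))).re) *
          detd d S x := by
      rw [← htrans]; ring
    rw [key]
    have e1 : |(fρ (fun i => ((St ε x i : ℝ) : ℂ))).re * (detd d (St ε) x - detd d S x)|
        ≤ L * ((d:ℝ) * B'^d * w) := by
      rw [abs_mul]
      exact mul_le_mul (by rw [abs_of_nonneg (by linarith only [ha1M, hM])]; exact ha1L) hdd
        (abs_nonneg _) hL0.le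
    have e2 : |((fρ (fun i => ((St ε x i : ℝ) : ℂ))).re -
        (fρ (fun i => ((S x i : ℝ) : ℂ))).re) * detd d S x| ≤ (Kρ*w) * B'^d := by
      rw [abs_mul]
      exact mul_le_mul hrediff hdSabs (abs_nonneg _) (by positivity)
    calc |(fρ (fun i => ((St ε x i : ℝ) : ℂ))).re * (detd d (St ε) x - detd d S x) +
        ((fρ (fun i => ((St ε x i : ℝ) : ℂ))).re - (fρ (fun i => ((S x i : ℝ) : ℂ))).re) *
          detd d S x| ≤ _ := abs_add_le _ _
      _ ≤ L * ((d:ℝ) * B'^d * w) + (Kρ*w) * B'^d := add_le_add e1 e2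
      _ = Kg * w := by rw [hKgdef]; ring
  have hgfine : w ≤ m₀/2 → ∀ x ∈ cube d,
      m₂ ≤ (fρ (fun i => ((St ε x i : ℝ) : ℂ))).re * detd d (St ε) x := by
    intro hws x hx
    have hStx := hStmap hx
    obtain ⟨h1, _⟩ := hρval (St ε x) hStx
    have hpdlow : ∀ j : Fin d, m₀/2 ≤ pd d (fun y => St ε y j) j x := by
      intro j
      have ha := hpdSm₀ j x hx
      have hb := (abs_le.mp (hpdiff j x hx)).2
      linarith only [ha, hb, hws]
    have hdetlow : (m₀/2)^d ≤ detd d (St ε) x := by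
      calc (m₀/2)^d = ∏ _j : Fin d, (m₀/2) := by simp [Finset.prod_const, div_pow]
        _ ≤ ∏ j : Fin d, pd d (fun y => St ε y j) j x :=
          Finset.prod_le_prod (fun j _ => by positivity) (fun j _ => hpdlow j)
        _ = detd d (St ε) x := rfl
    have hstep : m₁ ≤ (fρ (fun i => ((St ε x i : ℝ) : ℂ))).re * detd d (St ε) x := by
      rw [hm₁def]
      exact mul_le_mul h1 hdetlow (by positivity) (by linarith only [h1, hM])
    refine le_trans ?_ hstep
    rw [hm₂def]
    exact min_le_left _ _
  refine ⟨?_, ?_, ?_⟩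
  · -- Hellinger
    have hCE0 : 0 ≤ C * Eexp := by positivity
    have key : 2⁻¹ * (∫ x,
        (Real.sqrt ((fρ (fun i => ((St ε x i : ℝ) : ℂ))).re * detd d (St ε) x) -
          Real.sqrt ((fπ (fun i => ((x i : ℝ) : ℂ))).re)) ^ 2 ∂(muD d)) ≤ (C * Eexp)^2 := by
      rcases le_or_gt w (m₀/2) with hws | hws
      · have hIb : (∫ x,
            (Real.sqrt ((fρ (fun i => ((St ε x i : ℝ) : ℂ))).re * detd d (St ε) x) -
              Real.sqrt ((fπ (fun i => ((x i : ℝ) : ℂ))).re)) ^ 2 ∂(muD d))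
            ≤ (Kg*w)^2/(4*m₂) := by
          refine integral_le_of_bound _ ?_
          intro x hx
          rw [abs_of_nonneg (sq_nonneg _)]
          have hg2 := hgfine hws x hx
          have hp2 : m₂ ≤ (fπ (fun i => ((x i : ℝ) : ℂ))).re :=
            le_trans (by rw [hm₂def]; exact min_le_right m₁ M) (hπval x hx).1
          exact sqrt_sub_sq_le hm₂0 hg2 hp2 (hgp x hx)
        have hKw : Kg*w ≤ Kg*(C'*Eexp) := mul_le_mul_of_nonneg_left hwE hKg0
        have hnum : (Kg*w)^2 ≤ (Kg*(C'*Eexp))^2 := pow_le_pow_left₀ (by positivity) hKw 2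
        have hfle : Kg*C'/Real.sqrt (8*m₂) ≤ C := by
          refine le_trans ?_ hCHle
          rw [hCHdef]
          exact le_add_of_nonneg_right (by positivity)
        have hsq8 : Real.sqrt (8*m₂)^2 = 8*m₂ := Real.sq_sqrt (by positivity)
        have heq : (Kg*C'/Real.sqrt (8*m₂)*Eexp)^2 = (Kg*(C'*Eexp))^2/(8*m₂) := by
          rw [mul_pow, div_pow, hsq8, mul_pow, mul_pow]
          ring
        have hstep3 : (Kg*(C'*Eexp))^2/(8*m₂) ≤ (C*Eexp)^2 := by
          rw [← heq]
          exact pow_le_pow_left₀ (by positivity) (mul_le_mul_of_nonneg_right hfle hE0.le) 2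
        have hstep2 : (Kg*w)^2/(8*m₂) ≤ (Kg*(C'*Eexp))^2/(8*m₂) :=
          (div_le_div_iff_of_pos_right (by positivity)).mpr hnum
        calc 2⁻¹ * (∫ x,
            (Real.sqrt ((fρ (fun i => ((St ε x i : ℝ) : ℂ))).re * detd d (St ε) x) -
              Real.sqrt ((fπ (fun i => ((x i : ℝ) : ℂ))).re)) ^ 2 ∂(muD d))
            ≤ 2⁻¹ * ((Kg*w)^2/(4*m₂)) :=
              mul_le_mul_of_nonneg_left hIb (by norm_num)
          _ = (Kg*w)^2/(8*m₂) := by ring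
          _ ≤ (Kg*(C'*Eexp))^2/(8*m₂) := hstep2
          _ ≤ (C*Eexp)^2 := hstep3
      · have hIb : (∫ x,
            (Real.sqrt ((fρ (fun i => ((St ε x i : ℝ) : ℂ))).re * detd d (St ε) x) -
              Real.sqrt ((fπ (fun i => ((x i : ℝ) : ℂ))).re)) ^ 2 ∂(muD d))
            ≤ 2*M₁ + 2*L := by
          refine integral_le_of_bound _ ?_
          intro x hx
          rw [abs_of_nonneg (sq_nonneg _)]
          obtain ⟨hg0, hgM⟩ := hgval x hx
          obtain ⟨hp1, hp2⟩ := hπval x hx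
          have hp0 : (0:ℝ) ≤ (fπ (fun i => ((x i : ℝ) : ℂ))).re := by
            linarith only [hp1, hM]
          exact sq_sub_sqrt_le hg0 hgM hp0 hp2
        have hEc : m₀/(2*C') ≤ Eexp := by
          rw [div_le_iff₀ (by positivity)]
          linarith only [hws, hwE]
        have hfac : 1 ≤ (2*C'/m₀) * Eexp := by
          have h := mul_le_mul_of_nonneg_left hEc (by positivity : (0:ℝ) ≤ 2*C'/m₀)
          calc (1:ℝ) = (2*C'/m₀) * (m₀/(2*C')) := by field_simp
            _ ≤ _ := h
        have hsqML : Real.sqrt (M₁+L)^2 = M₁+L := Real.sq_sqrt (by positivity)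
        have hfle : Real.sqrt (M₁+L)*(2*C'/m₀) ≤ C := by
          refine le_trans ?_ hCHle
          rw [hCHdef]
          exact le_add_of_nonneg_left (by positivity)
        have h2 : M₁ + L ≤ (Real.sqrt (M₁+L)*((2*C'/m₀)*Eexp))^2 := by
          rw [mul_pow, hsqML]
          have ht2 : 1 ≤ ((2*C'/m₀)*Eexp)^2 := one_le_pow₀ hfac
          exact le_mul_of_one_le_right (by positivity) ht2
        have h3 : (Real.sqrt (M₁+L)*((2*C'/m₀)*Eexp))^2 ≤ (C*Eexp)^2 := by
          apply pow_le_pow_left₀ (by positivity)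
          calc Real.sqrt (M₁+L)*((2*C'/m₀)*Eexp) = (Real.sqrt (M₁+L)*(2*C'/m₀))*Eexp := by
                ring
            _ ≤ C*Eexp := mul_le_mul_of_nonneg_right hfle hE0.le
        calc 2⁻¹ * (∫ x,
            (Real.sqrt ((fρ (fun i => ((St ε x i : ℝ) : ℂ))).re * detd d (St ε) x) -
              Real.sqrt ((fπ (fun i => ((x i : ℝ) : ℂ))).re)) ^ 2 ∂(muD d))
            ≤ 2⁻¹ * (2*M₁ + 2*L) := mul_le_mul_of_nonneg_left hIb (by norm_num)
          _ = M₁ + L := by ring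
          _ ≤ (Real.sqrt (M₁+L)*((2*C'/m₀)*Eexp))^2 := h2
          _ ≤ (C*Eexp)^2 := h3
    calc Real.sqrt (2⁻¹ * ∫ x,
        (Real.sqrt ((fρ (fun i => ((St ε x i : ℝ) : ℂ))).re * detd d (St ε) x) -
          Real.sqrt ((fπ (fun i => ((x i : ℝ) : ℂ))).re)) ^ 2 ∂(muD d))
        ≤ Real.sqrt ((C * Eexp)^2) := Real.sqrt_le_sqrt key
      _ = C * Eexp := Real.sqrt_sq hCE0
  · -- total variation
    have hIb : (∫ x,
        |(fρ (fun i => ((St ε x i : ℝ) : ℂ))).re * detd d (St ε) x -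
          (fπ (fun i => ((x i : ℝ) : ℂ))).re| ∂(muD d)) ≤ Kg * w := by
      refine integral_le_of_bound _ ?_
      intro x hx
      rw [abs_abs]
      exact hgp x hx
    have h1 : Kg * w ≤ Kg * (C'*Eexp) := mul_le_mul_of_nonneg_left hwE hKg0
    have h2 : Kg * (C'*Eexp) ≤ CTV * Eexp := by
      rw [hCTVdef, add_mul]
      have h5 : (0:ℝ) ≤ (M₁+L)*(2*C'/m₀) * Eexp := by positivity
      have h6 : Kg * (C'*Eexp) = Kg*C' * Eexp := by ring
      linarith only [h5, h6]
    have h3 : CTV * Eexp ≤ C * Eexp := mul_le_mul_of_nonneg_right hCTVle hE0.le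
    have h4 : (2:ℝ)⁻¹ * (Kg * w) ≤ Kg * w := by
      linarith only [mul_nonneg hKg0 hw0]
    have h0 : 2⁻¹ * (∫ x,
        |(fρ (fun i => ((St ε x i : ℝ) : ℂ))).re * detd d (St ε) x -
          (fπ (fun i => ((x i : ℝ) : ℂ))).re| ∂(muD d)) ≤ 2⁻¹ * (Kg * w) :=
      mul_le_mul_of_nonneg_left hIb (by norm_num)
    linarith only [h0, h1, h2, h3, h4]
  · -- KL divergence
    rcases le_or_gt w (m₀/2) with hws | hws
    · have hIb : (∫ x,
          (fρ (fun i => ((St ε x i : ℝ) : ℂ))).re * detd d (St ε) x *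
            Real.log ((fρ (fun i => ((St ε x i : ℝ) : ℂ))).re * detd d (St ε) x /
              (fπ (fun i => ((x i : ℝ) : ℂ))).re) ∂(muD d)) ≤ (M₁*Kg/m₂) * w := by
        refine integral_le_of_bound _ ?_
        intro x hx
        obtain ⟨hg0, hgM⟩ := hgval x hx
        have hg2 := hgfine hws x hx
        have hp2 : m₂ ≤ (fπ (fun i => ((x i : ℝ) : ℂ))).re :=
          le_trans (by rw [hm₂def]; exact min_le_right m₁ M) (hπval x hx).1
        have hgpos : (0:ℝ) < (fρ (fun i => ((St ε x i : ℝ) : ℂ))).re * detd d (St ε) x :=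
          lt_of_lt_of_le hm₂0 hg2
        have hppos : (0:ℝ) < (fπ (fun i => ((x i : ℝ) : ℂ))).re := lt_of_lt_of_le hm₂0 hp2
        rw [Real.log_div hgpos.ne' hppos.ne']
        have hlog := abs_log_sub_log_le hm₂0 hg2 hp2
        have hgpx := hgp x hx
        rw [abs_mul]
        calc |(fρ (fun i => ((St ε x i : ℝ) : ℂ))).re * detd d (St ε) x| *
            |Real.log ((fρ (fun i => ((St ε x i : ℝ) : ℂ))).re * detd d (St ε) x) -
              Real.log ((fπ (fun i => ((x i : ℝ) : ℂ))).re)|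
            ≤ M₁ * (|(fρ (fun i => ((St ε x i : ℝ) : ℂ))).re * detd d (St ε) x -
                (fπ (fun i => ((x i : ℝ) : ℂ))).re| / m₂) :=
              mul_le_mul (by rwa [abs_of_nonneg hg0]) hlog (abs_nonneg _) hM₁0.le
          _ ≤ M₁ * ((Kg * w) / m₂) := by
              refine mul_le_mul_of_nonneg_left ?_ hM₁0.le
              exact (div_le_div_iff_of_pos_right hm₂0).mpr hgpx
          _ = (M₁*Kg/m₂) * w := by ring
      have h1 : (M₁*Kg/m₂) * w ≤ (M₁*Kg/m₂) * (C'*Eexp) :=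
        mul_le_mul_of_nonneg_left hwE (by positivity)
      have h2 : (M₁*Kg/m₂) * (C'*Eexp) ≤ CKL * Eexp := by
        rw [hCKLdef, add_mul]
        have h5 : (0:ℝ) ≤ KLc*(2*C'/m₀) * Eexp := by positivity
        have h6 : (M₁*Kg/m₂) * (C'*Eexp) = (M₁*Kg/m₂)*C' * Eexp := by ring
        linarith only [h5, h6]
      have h3 : CKL * Eexp ≤ C * Eexp := mul_le_mul_of_nonneg_right hCKLle hE0.le
      linarith only [hIb, h1, h2, h3]
    · have hIb : (∫ x,
          (fρ (fun i => ((St ε x i : ℝ) : ℂ))).re * detd d (St ε) x *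
            Real.log ((fρ (fun i => ((St ε x i : ℝ) : ℂ))).re * detd d (St ε) x /
              (fπ (fun i => ((x i : ℝ) : ℂ))).re) ∂(muD d)) ≤ KLc := by
        refine integral_le_of_bound _ ?_
        intro x hx
        obtain ⟨hg0, hgM⟩ := hgval x hx
        obtain ⟨hp1, hp2⟩ := hπval x hx
        have hppos : (0:ℝ) < (fπ (fun i => ((x i : ℝ) : ℂ))).re := lt_of_lt_of_le hM hp1
        set g := (fρ (fun i => ((St ε x i : ℝ) : ℂ))).re * detd d (St ε) x with hgdef
        rcases eq_or_lt_of_le hg0 with h0 | h0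
        · rw [← h0]
          simpa using hKLc0
        · rw [Real.log_div h0.ne' hppos.ne']
          have hlogp : |Real.log ((fπ (fun i => ((x i : ℝ) : ℂ))).re)|
              ≤ |Real.log M| + |Real.log L| := by
            rw [abs_le]
            constructor
            · have hlow : Real.log M ≤ Real.log ((fπ (fun i => ((x i : ℝ) : ℂ))).re) :=
                Real.log_le_log hM hp1
              have hna := neg_abs_le (Real.log M)
              have hnl : (0:ℝ) ≤ |Real.log L| := abs_nonneg _
              linarith only [hlow, hna, hnl]
            · have hup : Real.log ((fπ (fun i => ((x i : ℝ) : ℂ))).re) ≤ Real.log L :=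
                Real.log_le_log hppos hp2
              have hla := le_abs_self (Real.log L)
              have hnm : (0:ℝ) ≤ |Real.log M| := abs_nonneg _
              linarith only [hup, hla, hnm]
          have hglg : |g * Real.log g| ≤ 1 + M₁^2 := by
            rcases le_or_gt g 1 with hg1 | hg1
            · have hlt := Real.abs_log_mul_self_lt g h0 hg1
              rw [abs_mul] at hlt ⊢
              rw [mul_comm (|g|)]
              linarith only [hlt.le, sq_nonneg M₁]
            · have hlg0 : 0 ≤ Real.log g := Real.log_nonneg hg1.le
              have hlgM : Real.log g ≤ M₁ := by
                have hls := Real.log_le_sub_one_of_pos h0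
                linarith only [hls, hgM]
              rw [abs_of_nonneg (mul_nonneg hg0 hlg0)]
              have hmm : g * Real.log g ≤ M₁ * M₁ :=
                mul_le_mul hgM hlgM hlg0 hM₁0.le
              have hsq : M₁ * M₁ = M₁^2 := (sq M₁).symm
              linarith only [hmm, hsq]
          calc |g * (Real.log g - Real.log ((fπ (fun i => ((x i : ℝ) : ℂ))).re))|
              = |g * Real.log g - g * Real.log ((fπ (fun i => ((x i : ℝ) : ℂ))).re)| := by
                ring_nf
            _ ≤ |g * Real.log g| + |g * Real.log ((fπ (fun i => ((x i : ℝ) : ℂ))).re)| :=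
                abs_sub _ _
            _ ≤ (1 + M₁^2) + M₁*(|Real.log M| + |Real.log L|) := by
                refine add_le_add hglg ?_
                rw [abs_mul, abs_of_nonneg hg0]
                exact mul_le_mul hgM hlogp (abs_nonneg _) hM₁0.le
            _ = KLc := by rw [hKLcdef]
      have hEc : m₀/(2*C') ≤ Eexp := by
        rw [div_le_iff₀ (by positivity)]
        linarith only [hws, hwE]
      have hfac : 1 ≤ (2*C'/m₀) * Eexp := by
        have h := mul_le_mul_of_nonneg_left hEc (by positivity : (0:ℝ) ≤ 2*C'/m₀)
        calc (1:ℝ) = (2*C'/m₀) * (m₀/(2*C')) := by field_simp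
          _ ≤ _ := h
      have h1 : KLc ≤ KLc * ((2*C'/m₀) * Eexp) := le_mul_of_one_le_right hKLc0 hfac
      have h2 : KLc * ((2*C'/m₀) * Eexp) ≤ CKL * Eexp := by
        rw [hCKLdef, add_mul]
        have h5 : (0:ℝ) ≤ (M₁*Kg/m₂)*C' * Eexp := by positivity
        have h6 : KLc * ((2*C'/m₀) * Eexp) = KLc*(2*C'/m₀) * Eexp := by ring
        linarith only [h5, h6]
      have h3 : CKL * Eexp ≤ C * Eexp := mul_le_mul_of_nonneg_right hCKLle hE0.le
      linarith only [hIb, h1, h2, h3]
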